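/- Let 0→(t)→Ã→A→0 be a small extension of local artinian k-algebras, (C,Π) and (B,Λ) Poisson k-algebras, Φ: C⊗A → B⊗A a Poisson A-homomorphism lifting a Poisson homomorphism f:(C,Π)→(B,Λ), and Φ̃: C⊗Ã → B⊗Ã an Ã-algebra homomorphism lifting Φ. Define P ∈ Hom_C(∧²Ω_{C/k},B) by Φ̃(Π(a,b)) − Λ(Φ̃(a),Φ̃(b)) = tP(a,b). Then π(P) = 0, where π(P)(a,b,c) = Λ(P(a,b),f(c)) − Λ(P(a,c),f(b)) + Λ(P(b,c),f(a)) + P(Π(a,b),c) − P(Π(a,c),b) + P(Π(b,c),a). -/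

import Mathlib

/-- A Poisson bracket on a commutative algebra over a base commutative ring. -/
structure PoissonBracket (R₀ R : Type*) [CommRing R₀] [CommRing R] [Algebra R₀ R] where
  br : R → R → R
  add_left : ∀ a b c, br (a + b) c = br a c + br b c
  smul_left : ∀ (r : R₀) (a b : R), br (r • a) b = r • br a b
  antisymm : ∀ a b, br a b = - br b a
  leibniz : ∀ a b c, br a (b * c) = br a b * c + b * br a c
  jacobi : ∀ a b c, br a (br b c) + br b (br c a) + br c (br a b) = 0


section Aux
variable {R₀ R : Type*} [CommRing R₀] [CommRing R] [Algebra R₀ R] (Pb : PoissonBracket R₀ R)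

lemma PoissonBracket.zero_left (b : R) : Pb.br 0 b = 0 := by
  have h := Pb.add_left 0 0 b
  rw [add_zero] at h
  exact right_eq_add.mp h

lemma PoissonBracket.neg_left (a b : R) : Pb.br (-a) b = - Pb.br a b := by
  have h := Pb.add_left a (-a) b
  rw [add_neg_cancel, Pb.zero_left] at h
  linear_combination -h

lemma PoissonBracket.sub_left (a b c : R) : Pb.br (a - b) c = Pb.br a c - Pb.br b c := by
  rw [sub_eq_add_neg, Pb.add_left, Pb.neg_left, sub_eq_add_neg]

lemma PoissonBracket.smul_right (r : R₀) (a b : R) : Pb.br a (r • b) = r • Pb.br a b := by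
  rw [Pb.antisymm, Pb.smul_left, Pb.antisymm b a, smul_neg, neg_neg]

lemma PoissonBracket.neg_right (a b : R) : Pb.br a (-b) = - Pb.br a b := by
  rw [Pb.antisymm, Pb.neg_left, Pb.antisymm b a, neg_neg]

lemma PoissonBracket.cocycle_aux (a b c : R) :
    Pb.br (Pb.br a b) c - Pb.br (Pb.br a c) b + Pb.br (Pb.br b c) a = 0 := by
  have j := Pb.jacobi a b c
  have h1 := Pb.antisymm (Pb.br a b) c
  have h2 := Pb.antisymm (Pb.br a c) b
  have h3 := Pb.antisymm (Pb.br b c) a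
  have h5 : Pb.br b (Pb.br a c) = - Pb.br b (Pb.br c a) := by
    rw [Pb.antisymm a c, Pb.neg_right]
  linear_combination -j + h1 - h2 + h3 + h5

end Aux


/-!
STATEMENT 5.  Let `0 → (t) → Ã → A → 0` be a small extension, `Φ : C⊗A → B⊗A` a Poisson
`A`-homomorphism lifting `f`, and `Φ̃ : C⊗Ã → B⊗Ã` an `Ã`-algebra homomorphism lifting
`Φ` (so the Poisson defect of `Φ̃` is killed by `t`, and `t·(Φ̃(ιa) − ι(f a)) = 0`).
If `Φ̃(Π(a,b)) − Λ(Φ̃a,Φ̃b) = tP(a,b)` then `π(P) = 0`.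
-/
theorem stmt5
    {k B C At BA CA : Type*} [Field k]
    [CommRing B] [CommRing C] [Algebra k B] [Algebra k C]
    [CommRing At] [CommRing BA] [CommRing CA] [Algebra At BA] [Algebra At CA]
    (L : PoissonBracket k B) (P : PoissonBracket k C)
    (LA : PoissonBracket At BA) (PA : PoissonBracket At CA)
    (f : C →ₐ[k] B) (hf : ∀ a b, f (P.br a b) = L.br (f a) (f b))
    (ιB : B →+* BA) (ιC : C →+* CA)
    (hLA : ∀ x y : B, LA.br (ιB x) (ιB y) = ιB (L.br x y))
    (hPA : ∀ a b : C, PA.br (ιC a) (ιC b) = ιC (P.br a b))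
    (t : At) (ht2 : t * t = 0)
    (hinj : ∀ x : B, t • ιB x = 0 → x = 0)
    (Phi : CA →+* BA)
    (hPhilin : ∀ (s : At) (x : CA), Phi (s • x) = s • Phi x)
    -- `Φ̃` lifts the Poisson `A`-homomorphism `Φ`:
    (herr : ∀ x y : CA, t • (Phi (PA.br x y) - LA.br (Phi x) (Phi y)) = 0)
    -- `Φ̃` induces `f` modulo the maximal ideal:
    (hred : ∀ a : C, t • Phi (ιC a) = t • ιB (f a))
    (Pe : C → C → B)
    (hPe : ∀ a b : C,
      Phi (ιC (P.br a b)) - LA.br (Phi (ιC a)) (Phi (ιC b)) = t • ιB (Pe a b)) :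
    ∀ a b c : C,
      L.br (Pe a b) (f c) - L.br (Pe a c) (f b) + L.br (Pe b c) (f a)
        + Pe (P.br a b) c - Pe (P.br a c) b + Pe (P.br b c) a = 0 := by
  intro a b c
  apply hinj
  have key1 : ∀ x y z : C, t • ιB (L.br (Pe x y) (f z))
      = LA.br (Phi (ιC (P.br x y)) - LA.br (Phi (ιC x)) (Phi (ιC y))) (Phi (ιC z)) := by
    intro x y z
    calc t • ιB (L.br (Pe x y) (f z))
        = LA.br (ιB (Pe x y)) (t • ιB (f z)) := by
          rw [← hLA, ← LA.smul_right]
      _ = LA.br (ιB (Pe x y)) (t • Phi (ιC z)) := by rw [hred]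
      _ = LA.br (t • ιB (Pe x y)) (Phi (ιC z)) := by
          rw [LA.smul_right, ← LA.smul_left]
      _ = LA.br (Phi (ιC (P.br x y)) - LA.br (Phi (ιC x)) (Phi (ιC y))) (Phi (ιC z)) := by
          rw [hPe]
  have key4 : ∀ x y : C, t • ιB (Pe x y)
      = Phi (ιC (P.br x y)) - LA.br (Phi (ιC x)) (Phi (ιC y)) := fun x y => (hPe x y).symm
  simp only [map_add, map_sub, smul_add, smul_sub]
  rw [key1 a b c, key1 a c b, key1 b c a, key4 (P.br a b) c, key4 (P.br a c) b,
    key4 (P.br b c) a, LA.sub_left, LA.sub_left, LA.sub_left]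
  have hC := P.cocycle_aux a b c
  have hB := LA.cocycle_aux (Phi (ιC a)) (Phi (ιC b)) (Phi (ιC c))
  have hmap := congrArg (fun x => Phi (ιC x)) hC
  simp only [map_sub, map_add, map_zero] at hmap
  linear_combination hmap - hB
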